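/- Define φ(x) = log 2 - (1/2)((1+x)log(1+x) + (1-x)log(1-x)). Then ∫_0^∞ φ(tanh u) du = 2·∫_0^∞ log(1 + e^{-2u}) du = π²/12. -/

import Mathlib

open MeasureTheory Real

open Set in
private lemma stmt10J1 {c : ℝ} (hc : 0 < c) :
    ∫ u in Ioi (0:ℝ), Real.exp (-(c*u)) = 1/c := by
  have h := Real.integral_rpow_mul_exp_neg_mul_Ioi (a := 1) one_pos hc
  simpa using h

open Set in
private lemma stmt10J2 {c : ℝ} (hc : 0 < c) :
    ∫ u in Ioi (0:ℝ), u * Real.exp (-(c*u)) = 1/c^2 := by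
  have h := Real.integral_rpow_mul_exp_neg_mul_Ioi (a := 2) two_pos hc
  have h2 : ∫ u in Ioi (0:ℝ), u * Real.exp (-(c*u))
      = ∫ t in Ioi (0:ℝ), t ^ ((2:ℝ) - 1) * Real.exp (-(c*t)) := by
    refine setIntegral_congr_fun measurableSet_Ioi (fun t ht => ?_)
    rw [show (2:ℝ) - 1 = 1 by norm_num, Real.rpow_one]
  rw [h2, h, Real.Gamma_two, mul_one,
    show ((2:ℝ)) = ((2:ℕ):ℝ) by norm_num, Real.rpow_natCast]
  ring

open Set in
private lemma stmt10int1 {c : ℝ} (hc : 0 < c) :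
    IntegrableOn (fun u => Real.exp (-(c*u))) (Ioi (0:ℝ)) := by
  simpa [neg_mul] using exp_neg_integrableOn_Ioi 0 hc

open Set in
private lemma stmt10int2 {c : ℝ} (hc : 0 < c) :
    IntegrableOn (fun u => u * Real.exp (-(c*u))) (Ioi (0:ℝ)) := by
  have := integrableOn_rpow_mul_exp_neg_mul_rpow (s := 1) (p := 1) (by norm_num) zero_lt_one hc
  simpa [Real.rpow_one, neg_mul] using this

private lemma stmt10zeta2' : HasSum (fun n : ℕ => (1:ℝ) / ((n:ℝ)+1)^2) (π^2/6) := by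
  have h := (hasSum_nat_add_iff' (f := fun n : ℕ => (1:ℝ)/(n:ℝ)^2) 1).2 hasSum_zeta_two
  simpa using h

private lemma stmt10eta2 : HasSum (fun n : ℕ => (-1:ℝ)^n / ((n:ℝ)+1)^2) (π^2/12) := by
  have hi : Function.Injective (fun k : ℕ => 2*k+1) := by
    intro a b h; dsimp at h; omega
  have hsupp : Function.support (fun n : ℕ => (1:ℝ)/((n:ℝ)+1)^2 - (-1:ℝ)^n/((n:ℝ)+1)^2)
      ⊆ Set.range (fun k : ℕ => 2*k+1) := by
    intro n hn
    rcases Nat.even_or_odd n with he | ho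
    · exact absurd (by simp [he.neg_one_pow, one_div]) hn
    · obtain ⟨k, hk⟩ := ho
      exact ⟨k, hk.symm⟩
  have hd : HasSum (fun n : ℕ => (1:ℝ)/((n:ℝ)+1)^2 - (-1:ℝ)^n/((n:ℝ)+1)^2) (π^2/12) := by
    rw [← Function.Injective.hasSum_iff hi
      (fun n hn => Function.notMem_support.mp (fun hs => hn (hsupp hs)))]
    have h2 : HasSum (fun k : ℕ => (1/2:ℝ) * (1/((k:ℝ)+1)^2)) (1/2 * (π^2/6)) :=
      stmt10zeta2'.mul_left (1/2)
    have hv : (1/2 : ℝ) * (π^2/6) = π^2/12 := by ring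
    rw [hv] at h2
    convert h2 using 1
    funext k
    have ho : ((-1:ℝ))^(2*k+1) = -1 := Odd.neg_one_pow ⟨k, rfl⟩
    show (1:ℝ)/((((2*k+1:ℕ)):ℝ)+1)^2 - (-1:ℝ)^(2*k+1)/((((2*k+1:ℕ)):ℝ)+1)^2 = _
    rw [ho]
    push_cast
    have h0 : ((2:ℝ)*k+1+1) ≠ 0 := by positivity
    field_simp
    ring
  have h := stmt10zeta2'.sub hd
  have harith : π^2/6 - π^2/12 = π^2/12 := by ring
  rw [harith] at h
  have hfun : (fun n : ℕ => (-1:ℝ)^n/((n:ℝ)+1)^2)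
      = fun n : ℕ => (1:ℝ)/((n:ℝ)+1)^2 - ((1:ℝ)/((n:ℝ)+1)^2 - (-1:ℝ)^n/((n:ℝ)+1)^2) := by
    funext n; ring
  rw [hfun]; exact h

private lemma stmt10tanh_formula (u : ℝ) :
    Real.tanh u = (1 - Real.exp (-2*u)) / (1 + Real.exp (-2*u)) := by
  have hE : (0:ℝ) < Real.exp (-2*u) := Real.exp_pos _
  have h1E : (0:ℝ) < 1 + Real.exp (-2*u) := by linarith
  have hc : (0:ℝ) < Real.exp u + Real.exp (-u) := by positivity
  rw [Real.tanh_eq_sinh_div_cosh, Real.sinh_eq, Real.cosh_eq]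
  have h1 : Real.exp (-2*u) = Real.exp (-u) * Real.exp (-u) := by
    rw [← Real.exp_add]; ring_nf
  have h2 : Real.exp u * Real.exp (-u) = 1 := by
    rw [← Real.exp_add]; simp
  rw [h1]
  rw [div_div_div_cancel_right₀, div_eq_div_iff (ne_of_gt hc) (by nlinarith)]
  · nlinarith [h2]
  · norm_num

private lemma stmt10phi_eq (u : ℝ) :
    Real.log 2 - (1/2)*((1 + Real.tanh u) * Real.log (1 + Real.tanh u)
      + (1 - Real.tanh u) * Real.log (1 - Real.tanh u))
    = Real.log (1 + Real.exp (-2*u))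
      + 2*u*Real.exp (-2*u)/(1 + Real.exp (-2*u)) := by
  have hE : (0:ℝ) < Real.exp (-2*u) := Real.exp_pos _
  set E := Real.exp (-2*u) with hEdef
  have h1E : (0:ℝ) < 1 + E := by linarith
  have ht := stmt10tanh_formula u
  rw [← hEdef] at ht
  have ht1 : 1 + Real.tanh u = 2/(1+E) := by
    rw [ht]; field_simp; norm_num
  have ht2 : 1 - Real.tanh u = 2*E/(1+E) := by
    rw [ht]; field_simp; ring
  have hlog1 : Real.log (1 + Real.tanh u) = Real.log 2 - Real.log (1+E) := by
    rw [ht1, Real.log_div two_ne_zero (ne_of_gt h1E)]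
  have hlog2 : Real.log (1 - Real.tanh u) = Real.log 2 + (-2*u) - Real.log (1+E) := by
    rw [ht2, Real.log_div (by positivity) (ne_of_gt h1E),
      Real.log_mul two_ne_zero (ne_of_gt hE), hEdef, Real.log_exp]
  rw [hlog1, hlog2, ht1, ht2]
  field_simp
  ring

private lemma stmt10hpow (u : ℝ) (m : ℕ) :
    (Real.exp (-2*u))^m = Real.exp (-(2*m*u)) := by
  rw [← Real.exp_nat_mul]; congr 1; ring

private lemma stmt10habs {u : ℝ} (hu : 0 < u) : |(-Real.exp (-2*u))| < 1 := by
  rw [abs_neg, abs_of_pos (Real.exp_pos _)]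
  exact Real.exp_lt_one_iff.mpr (by linarith)

private lemma stmt10hasSum_log (u : ℝ) (hu : 0 < u) :
    HasSum (fun n : ℕ => (-1:ℝ)^n * ((1/((n:ℝ)+1)) * Real.exp (-(2*((n:ℝ)+1)*u))))
      (Real.log (1 + Real.exp (-2*u))) := by
  have h := (hasSum_pow_div_log_of_abs_lt_one (stmt10habs hu)).neg
  have h2 : (1:ℝ) - (-Real.exp (-2*u)) = 1 + Real.exp (-2*u) := by ring
  rw [h2, neg_neg] at h
  have hfun : (fun n : ℕ => (-1:ℝ)^n * ((1/((n:ℝ)+1)) * Real.exp (-(2*((n:ℝ)+1)*u))))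
      = fun n : ℕ => -((-Real.exp (-2*u))^(n+1) / ((n:ℝ)+1)) := by
    funext n
    rw [neg_pow (Real.exp (-2*u)) (n+1), stmt10hpow u (n+1)]
    push_cast
    ring
  rw [hfun]
  exact h

private lemma stmt10hasSum_tail (u : ℝ) (hu : 0 < u) :
    HasSum (fun n : ℕ => (-1:ℝ)^n * (2*(u * Real.exp (-(2*((n:ℝ)+1)*u)))))
      (2*u*Real.exp (-2*u)/(1 + Real.exp (-2*u))) := by
  have h := (hasSum_geometric_of_abs_lt_one (stmt10habs hu)).mul_left (2*u*Real.exp (-2*u))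
  have h2 : (1:ℝ) - (-Real.exp (-2*u)) = 1 + Real.exp (-2*u) := by ring
  rw [h2] at h
  have hfun : (fun n : ℕ => (-1:ℝ)^n * (2*(u * Real.exp (-(2*((n:ℝ)+1)*u)))))
      = fun n : ℕ => 2*u*Real.exp (-2*u) * (-Real.exp (-2*u))^n := by
    funext n
    rw [neg_pow (Real.exp (-2*u)) n, stmt10hpow u n]
    rw [show Real.exp (-(2*((n:ℝ)+1)*u)) = Real.exp (-(2*(n:ℝ)*u)) * Real.exp (-2*u) by
      rw [← Real.exp_add]; congr 1; ring]
    ring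
  rw [hfun]
  simpa [div_eq_mul_inv] using h

open Set in
private lemma stmt10intA :
    ∫ u in Ioi (0:ℝ), Real.log (1 + Real.exp (-2*u)) = π^2/24 := by
  set F : ℕ → ℝ → ℝ :=
    fun n u => (-1:ℝ)^n * ((1/((n:ℝ)+1)) * Real.exp (-(2*((n:ℝ)+1)*u))) with hF
  have hc : ∀ n : ℕ, (0:ℝ) < 2*((n:ℝ)+1) := fun n => by positivity
  have hint : ∀ n, Integrable (F n) (volume.restrict (Ioi 0)) := fun n =>
    ((stmt10int1 (hc n)).const_mul _).const_mul _
  have hnorm : ∀ n : ℕ, (∫ u in Ioi (0:ℝ), ‖F n u‖) = (1/2) * ((1:ℝ)/((n:ℝ)+1)^2) := by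
    intro n
    have heq : ∀ u ∈ Ioi (0:ℝ), ‖F n u‖
        = (1/((n:ℝ)+1)) * Real.exp (-(2*((n:ℝ)+1)*u)) := by
      intro u hu
      rw [hF]
      rw [Real.norm_eq_abs, abs_mul, abs_mul, abs_pow, abs_neg, abs_one, one_pow, one_mul,
        abs_of_pos (by positivity : (0:ℝ) < 1/((n:ℝ)+1)), abs_of_pos (Real.exp_pos _)]
    rw [setIntegral_congr_fun measurableSet_Ioi heq, integral_const_mul, stmt10J1 (hc n)]
    have h0 : ((n:ℝ)+1) ≠ 0 := by positivity
    field_simp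
  have hsum : Summable (fun n => ∫ u in Ioi (0:ℝ), ‖F n u‖) := by
    simp only [hnorm]
    exact stmt10zeta2'.summable.mul_left _
  have key := MeasureTheory.hasSum_integral_of_summable_integral_norm hint hsum
  have hteq : (∫ u in Ioi (0:ℝ), ∑' n, F n u)
      = ∫ u in Ioi (0:ℝ), Real.log (1+Real.exp (-2*u)) := by
    refine setIntegral_congr_fun measurableSet_Ioi (fun u hu => ?_)
    exact (stmt10hasSum_log u hu).tsum_eq
  rw [hteq] at key
  have hval : (fun n : ℕ => ∫ u in Ioi (0:ℝ), F n u)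
      = fun n : ℕ => (1/2:ℝ) * ((-1:ℝ)^n/((n:ℝ)+1)^2) := by
    funext n
    rw [hF]
    rw [integral_const_mul, integral_const_mul, stmt10J1 (hc n)]
    have h0 : ((n:ℝ)+1) ≠ 0 := by positivity
    field_simp
  rw [hval] at key
  have h24 := stmt10eta2.mul_left (1/2)
  have := key.unique h24
  rw [this]; ring

open Set in
private lemma stmt10intMain : ∫ u in Ioi (0:ℝ),
    (Real.log (1 + Real.exp (-2*u)) + 2*u*Real.exp (-2*u)/(1 + Real.exp (-2*u)))
    = π^2/12 := by
  set H : ℕ → ℝ → ℝ :=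
    fun n u => (-1:ℝ)^n * ((1/((n:ℝ)+1)) * Real.exp (-(2*((n:ℝ)+1)*u)))
      + (-1:ℝ)^n * (2*(u * Real.exp (-(2*((n:ℝ)+1)*u)))) with hH
  have hc : ∀ n : ℕ, (0:ℝ) < 2*((n:ℝ)+1) := fun n => by positivity
  have hint : ∀ n, Integrable (H n) (volume.restrict (Ioi 0)) := fun n =>
    (((stmt10int1 (hc n)).const_mul _).const_mul _).add
      (((stmt10int2 (hc n)).const_mul _).const_mul _)
  have hnorm : ∀ n : ℕ, (∫ u in Ioi (0:ℝ), ‖H n u‖) = (1:ℝ)/((n:ℝ)+1)^2 := by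
    intro n
    have heq : ∀ u ∈ Ioi (0:ℝ), ‖H n u‖
        = (1/((n:ℝ)+1)) * Real.exp (-(2*((n:ℝ)+1)*u)) + 2*(u * Real.exp (-(2*((n:ℝ)+1)*u))) := by
      intro u hu
      have hu0 : (0:ℝ) < u := hu
      have hX : (0:ℝ) ≤ (1/((n:ℝ)+1)) * Real.exp (-(2*((n:ℝ)+1)*u))
          + 2*(u * Real.exp (-(2*((n:ℝ)+1)*u))) := by positivity
      rw [hH]
      dsimp only
      rw [show (-1:ℝ)^n * ((1/((n:ℝ)+1)) * Real.exp (-(2*((n:ℝ)+1)*u)))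
          + (-1:ℝ)^n * (2*(u * Real.exp (-(2*((n:ℝ)+1)*u))))
          = (-1:ℝ)^n * ((1/((n:ℝ)+1)) * Real.exp (-(2*((n:ℝ)+1)*u))
            + 2*(u * Real.exp (-(2*((n:ℝ)+1)*u)))) from by ring]
      rw [Real.norm_eq_abs, abs_mul, abs_pow, abs_neg, abs_one, one_pow, one_mul,
        abs_of_nonneg hX]
    rw [setIntegral_congr_fun measurableSet_Ioi heq]
    rw [integral_add ((stmt10int1 (hc n)).const_mul _) ((stmt10int2 (hc n)).const_mul _),
      integral_const_mul, integral_const_mul, stmt10J1 (hc n), stmt10J2 (hc n)]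
    have h0 : ((n:ℝ)+1) ≠ 0 := by positivity
    field_simp
    ring
  have hsum : Summable (fun n => ∫ u in Ioi (0:ℝ), ‖H n u‖) := by
    simp only [hnorm]
    exact stmt10zeta2'.summable
  have key := MeasureTheory.hasSum_integral_of_summable_integral_norm hint hsum
  have hteq : (∫ u in Ioi (0:ℝ), ∑' n, H n u)
      = ∫ u in Ioi (0:ℝ),
        (Real.log (1 + Real.exp (-2*u)) + 2*u*Real.exp (-2*u)/(1 + Real.exp (-2*u))) := by
    refine setIntegral_congr_fun measurableSet_Ioi (fun u hu => ?_)
    exact ((stmt10hasSum_log u hu).add (stmt10hasSum_tail u hu)).tsum_eq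
  rw [hteq] at key
  have hval : (fun n : ℕ => ∫ u in Ioi (0:ℝ), H n u)
      = fun n : ℕ => (-1:ℝ)^n/((n:ℝ)+1)^2 := by
    funext n
    rw [hH]
    dsimp only
    rw [integral_add (((stmt10int1 (hc n)).const_mul _).const_mul _)
        (((stmt10int2 (hc n)).const_mul _).const_mul _),
      integral_const_mul, integral_const_mul, integral_const_mul, integral_const_mul,
      stmt10J1 (hc n), stmt10J2 (hc n)]
    have h0 : ((n:ℝ)+1) ≠ 0 := by positivity
    field_simp
    ring
  rw [hval] at key
  exact key.unique stmt10eta2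

/-- `∫_0^∞ φ(tanh u) du = 2 ∫_0^∞ log(1 + e^{-2u}) du = π²/12`, where
`φ(x) = log 2 - (1/2)((1+x)log(1+x) + (1-x)log(1-x))`. -/
theorem stmt10 (φ : ℝ → ℝ)
    (hφ : ∀ x, φ x = Real.log 2 -
      (1 / 2) * ((1 + x) * Real.log (1 + x) + (1 - x) * Real.log (1 - x))) :
    (∫ u in Set.Ioi (0 : ℝ), φ (Real.tanh u))
      = 2 * ∫ u in Set.Ioi (0 : ℝ), Real.log (1 + Real.exp (-2 * u)) ∧
    (∫ u in Set.Ioi (0 : ℝ), φ (Real.tanh u)) = π ^ 2 / 12 := by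
  have hcong : (∫ u in Set.Ioi (0:ℝ), φ (Real.tanh u))
      = ∫ u in Set.Ioi (0:ℝ),
        (Real.log (1 + Real.exp (-2*u)) + 2*u*Real.exp (-2*u)/(1 + Real.exp (-2*u))) := by
    refine setIntegral_congr_fun measurableSet_Ioi (fun u hu => ?_)
    rw [hφ]
    exact stmt10phi_eq u
  constructor
  · rw [hcong, stmt10intMain, stmt10intA]; ring
  · rw [hcong, stmt10intMain]
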